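/- arXiv:2004.11618 — 4 statements merged into one kernel-verified Lean document; each statement's English description precedes it below -/
import Mathlib

section
/- Let G₁, G₂, G₃ be groups and let H be a subgroup of G₁ × G₂ × G₃ whose projection onto G₁ × G₂ (forgetting the third coordinate) is all of G₁ × G₂ and whose projection onto G₃ is all of G₃. Let N₃ = { g₃ ∈ G₃ : (1, 1, g₃) ∈ H }. Then the subgroup G₁ × {1} × {1} is contained in H if and only if for every (g₁, g₂, g₃) ∈ H with g₂ = 1 one has g₃ ∈ N₃. -/
/-- Let `H ≤ G₁ × G₂ × G₃` project onto all of `G₁ × G₂` (first two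
coordinates) and onto all of `G₃`, and let `N₃ = {g₃ : (1,1,g₃) ∈ H}`.  Then
`G₁ × {1} × {1} ≤ H` if and only if every `(g₁, g₂, g₃) ∈ H` with `g₂ = 1`
has `g₃ ∈ N₃`. -/
theorem stmt_5 {G₁ G₂ G₃ : Type*} [Group G₁] [Group G₂] [Group G₃]
    (H : Subgroup (G₁ × G₂ × G₃))
    (hsurj₁₂ : ∀ p : G₁ × G₂, ∃ h ∈ H, (h.1, h.2.1) = p)
    (hsurj₃ : ∀ g₃ : G₃, ∃ h ∈ H, h.2.2 = g₃) :
    (∀ g₁ : G₁, ((g₁, 1, 1) : G₁ × G₂ × G₃) ∈ H) ↔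
      (∀ h ∈ H, h.2.1 = 1 → (((1 : G₁), (1 : G₂), h.2.2) : G₁ × G₂ × G₃) ∈ H) := by
  constructor
  · intro hall h hH h2
    have := H.mul_mem (H.inv_mem (hall h.1)) hH
    obtain ⟨h1, h2', h3⟩ := h
    simp_all [Prod.mul_def]
  · intro hcond g₁
    obtain ⟨h, hH, hp⟩ := hsurj₁₂ (g₁, 1)
    have h1 : h.1 = g₁ := congrArg Prod.fst hp
    have h2 : h.2.1 = 1 := congrArg Prod.snd hp
    have := H.mul_mem hH (H.inv_mem (hcond h hH h2))
    obtain ⟨a, b, c⟩ := h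
    simp_all [Prod.mul_def]
end

section
/- Let α be a finite set, H a subgroup of the symmetric group Sym(α), and let A and C be disjoint direct factors of H, with Γ = Supp(A) and Δ = Supp(C). Then for every a ∈ A there exists a' ∈ A such that a'(x) = a(x) for all x ∈ Γ ∩ Δ and a'(x) = x for all x ∉ Γ ∩ Δ. (In other words, A = A|_{Γ∖Δ} × A|_{Γ∩Δ} is a disjoint direct product decomposition of A.) -/
/-- The support of a subgroup `A ≤ Sym(α)`: the union of the supports of its
elements, i.e. the set of points moved by some element of `A`. -/
def Supp {α : Type*} (A : Subgroup (Equiv.Perm α)) : Set α :=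
  {x : α | ∃ a ∈ A, a x ≠ x}

/-- `A` is a disjoint direct factor of `H`: `A ≤ H` and, for every `h ∈ H`, the map
agreeing with `h` on `Supp A` and fixing every point outside `Supp A` is a
permutation belonging to `A`.  (Every element of `A` is supported in `Supp A` by
the definition of `Supp`.) -/
def IsDisjointDirectFactor {α : Type*} (H A : Subgroup (Equiv.Perm α)) : Prop :=
  A ≤ H ∧ ∀ h ∈ H, ∃ a ∈ A, (∀ x ∈ Supp A, a x = h x) ∧ ∀ x ∉ Supp A, a x = x

/-- Let `A` and `C` be disjoint direct factors of `H ≤ Sym(α)`,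
`Γ = Supp A`, `Δ = Supp C`.  Then for every `a ∈ A` there is `a' ∈ A` agreeing with
`a` on `Γ ∩ Δ` and fixing every point outside `Γ ∩ Δ`; in other words
`A = A|_{Γ∖Δ} × A|_{Γ∩Δ}` is a disjoint direct product decomposition of `A`. -/
theorem stmt_7 {α : Type*} [Finite α] (H A C : Subgroup (Equiv.Perm α))
    (hA : IsDisjointDirectFactor H A) (hC : IsDisjointDirectFactor H C) :
    ∀ a ∈ A, ∃ a' ∈ A,
      (∀ x ∈ Supp A ∩ Supp C, a' x = a x) ∧ ∀ x ∉ Supp A ∩ Supp C, a' x = x := by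
  intro a ha
  obtain ⟨hAH, hAfac⟩ := hA
  obtain ⟨hCH, hCfac⟩ := hC
  obtain ⟨c, hcC, hc1, hc2⟩ := hCfac a (hAH ha)
  obtain ⟨a', ha'A, ha1, ha2⟩ := hAfac c (hCH hcC)
  refine ⟨a', ha'A, ?_, ?_⟩
  · rintro x ⟨hxA, hxC⟩
    rw [ha1 x hxA, hc1 x hxC]
  · intro x hx
    by_cases hxA : x ∈ Supp A
    · have hxC : x ∉ Supp C := fun hxC => hx ⟨hxA, hxC⟩
      rw [ha1 x hxA, hc2 x hxC]
    · exact ha2 x hxA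
end

section
/- Let α be a finite set and H a subgroup of Sym(α). Suppose (H₁, …, H_r) and (K₁, …, K_s) are two finest disjoint direct product decompositions of H. Then the set of sets { Supp(H_i) : 1 ≤ i ≤ r } equals the set of sets { Supp(K_j) : 1 ≤ j ≤ s }. In other words, up to equivalence there is a unique finest disjoint direct product decomposition of H. -/
/-- A disjoint direct product decomposition of `H ≤ Sym(α)`: a family of nontrivial
subgroups with pairwise disjoint supports whose join is `H`. -/
def IsDDPDecomposition {α : Type*} (H : Subgroup (Equiv.Perm α)) {r : ℕ}
    (F : Fin r → Subgroup (Equiv.Perm α)) : Prop :=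
  (∀ i, F i ≠ ⊥) ∧ (∀ i j, i ≠ j → Disjoint (Supp (F i)) (Supp (F j))) ∧
    (⨆ i, F i) = H

/-- `K` is d.d.p. indecomposable: it admits no disjoint direct product decomposition
with more than one (nontrivial) factor. -/
def DDPIndecomposable {α : Type*} (K : Subgroup (Equiv.Perm α)) : Prop :=
  ∀ (r : ℕ) (F : Fin r → Subgroup (Equiv.Perm α)), IsDDPDecomposition K F → r ≤ 1

open Equiv Finset

section Aux

variable {α : Type*}

/-- The subgroup of permutations supported inside `S`. -/
def suppIn (S : Set α) : Subgroup (Perm α) where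
  carrier := {g | ∀ x, g x ≠ x → x ∈ S}
  one_mem' := fun _ hx => absurd rfl hx
  mul_mem' := by
    intro a b ha hb x hx
    by_cases h : b x = x
    · exact ha x (by simpa [Perm.mul_apply, h] using hx)
    · exact hb x h
  inv_mem' := by
    intro a ha x hx
    exact ha x fun h => hx ((Equiv.Perm.inv_eq_iff_eq).mpr h.symm)

lemma mem_suppIn {S : Set α} {g : Perm α} : g ∈ suppIn S ↔ ∀ x, g x ≠ x → x ∈ S := Iff.rfl

lemma suppIn_mono {S T : Set α} (h : S ⊆ T) : suppIn S ≤ suppIn T :=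
  fun _ hg x hx => h (hg x hx)

lemma mem_Supp_of {A : Subgroup (Perm α)} {a : Perm α} (ha : a ∈ A) {x : α} (hx : a x ≠ x) :
    x ∈ Supp A := ⟨a, ha, hx⟩

lemma le_suppIn_Supp (A : Subgroup (Perm α)) : A ≤ suppIn (Supp A) :=
  fun a ha x hx => ⟨a, ha, hx⟩

lemma Supp_subset_of_le {A : Subgroup (Perm α)} {S : Set α} (h : A ≤ suppIn S) : Supp A ⊆ S :=
  fun x hx => by obtain ⟨a, ha, hax⟩ := hx; exact h ha x hax

lemma Supp_mono {A B : Subgroup (Perm α)} (h : A ≤ B) : Supp A ⊆ Supp B :=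
  fun x hx => by obtain ⟨a, ha, hax⟩ := hx; exact ⟨a, h ha, hax⟩

lemma exists_moved {A : Subgroup (Perm α)} (h : A ≠ ⊥) : ∃ x, x ∈ Supp A := by
  by_contra hno
  push_neg at hno
  apply h
  rw [Subgroup.eq_bot_iff_forall]
  intro a ha
  ext x
  by_contra hx
  exact hno x ⟨a, ha, hx⟩

/-- Elements of subgroups with disjoint supports commute. -/
lemma hcomm_of {r : ℕ} {F : Fin r → Subgroup (Perm α)}
    (hdisj : ∀ i j, i ≠ j → Disjoint (Supp (F i)) (Supp (F j))) :
    Pairwise fun i j : Fin r => ∀ x y : Perm α, x ∈ F i → y ∈ F j → Commute x y := by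
  intro i j hij x y hx hy
  apply Equiv.Perm.Disjoint.commute
  intro z
  by_cases h : x z = z
  · exact Or.inl h
  · refine Or.inr (by_contra fun h' => ?_)
    exact Set.disjoint_left.mp (hdisj i j hij) ⟨x, hx, h⟩ ⟨y, hy, h'⟩

/-- A product of permutations with pairwise disjoint supports agrees with its `i`-th
factor at any point moved by that factor. -/
lemma noncommProd_apply_moved {r : ℕ} {F : Fin r → Subgroup (Perm α)}
    (hdisj : ∀ i j, i ≠ j → Disjoint (Supp (F i)) (Supp (F j)))
    {f : Fin r → Perm α} (hmem : ∀ i', f i' ∈ F i') (comm) {i : Fin r} {x : α}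
    (hx : f i x ≠ x) :
    (univ.noncommProd f comm) x = f i x := by
  classical
  have hy : f i x ∈ Supp (F i) :=
    ⟨f i, hmem i, fun h => hx ((f i).injective h)⟩
  rw [← Finset.noncommProd_erase_mul univ (mem_univ i) f comm, Perm.mul_apply]
  suffices h : ∀ g : Perm α, g ∈ suppIn ((Supp (F i))ᶜ) → g (f i x) = f i x by
    refine h _ (Subgroup.noncommProd_mem _ _ ?_)
    intro i' hi' z hz
    exact Set.disjoint_left.mp (hdisj i' i (Finset.ne_of_mem_erase hi')) ⟨f i', hmem i', hz⟩
  intro g hg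
  by_contra hne
  exact hg _ hne hy

lemma coprod_mem {r : ℕ} {F : Fin r → Subgroup (Perm α)}
    (hcomm : Pairwise fun i j : Fin r => ∀ x y : Perm α, x ∈ F i → y ∈ F j → Commute x y)
    (f : (i : Fin r) → F i) {K : Subgroup (Perm α)} (h : ∀ i, (f i : Perm α) ∈ K) :
    Subgroup.noncommPiCoprod hcomm f ∈ K := by
  rw [Subgroup.noncommPiCoprod_apply]
  exact K.noncommProd_mem _ (fun i _ => h i)

lemma coprod_apply_moved {r : ℕ} {F : Fin r → Subgroup (Perm α)}
    (hdisj : ∀ i j, i ≠ j → Disjoint (Supp (F i)) (Supp (F j)))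
    (f : (i : Fin r) → F i) {i : Fin r} {x : α} (hx : (f i : Perm α) x ≠ x) :
    (Subgroup.noncommPiCoprod (hcomm_of hdisj) f : Perm α) x = (f i : Perm α) x := by
  rw [Subgroup.noncommPiCoprod_apply]
  exact noncommProd_apply_moved hdisj (fun i' => (f i').2) _ hx

/-- An element of `H = ∏ F i` whose support avoids the supports of all factors other
than `F i` belongs to `F i`. -/
lemma mem_of_comp {r : ℕ} {H : Subgroup (Perm α)} {F : Fin r → Subgroup (Perm α)}
    (hF : IsDDPDecomposition H F) {k : Perm α} (hk : k ∈ H) (i : Fin r)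
    (hsupp : ∀ i', i' ≠ i → ∀ x, k x ≠ x → x ∉ Supp (F i')) : k ∈ F i := by
  classical
  obtain ⟨-, hdisj, hsup⟩ := hF
  rw [← hsup, ← Subgroup.noncommPiCoprod_range (hcomm := hcomm_of hdisj),
    MonoidHom.mem_range] at hk
  obtain ⟨f, hf⟩ := hk
  have hone : ∀ i', i' ≠ i → f i' = 1 := by
    intro i' hne
    by_contra h1
    have h2 : (f i' : Perm α) ≠ 1 := fun h => h1 (Subtype.ext h)
    obtain ⟨x, hx⟩ : ∃ x, (f i' : Perm α) x ≠ x := by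
      by_contra hall
      push_neg at hall
      exact h2 (Equiv.ext hall)
    have hkx : k x ≠ x := by
      rw [← hf, coprod_apply_moved hdisj f hx]; exact hx
    exact hsupp i' hne x hkx ⟨f i', (f i').2, hx⟩
  have hsingle : f = Pi.mulSingle i (f i) := funext fun i' => by
    rcases eq_or_ne i' i with rfl | hne
    · simp
    · rw [Pi.mulSingle_eq_of_ne hne, hone i' hne]
  rw [hsingle, Subgroup.noncommPiCoprod_mulSingle] at hf
  exact hf ▸ (f i).2

/-- Key lemma: each factor of a finest decomposition `G` is contained in some factor
of any decomposition `F`. -/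
lemma comp_le {r s : ℕ} {H : Subgroup (Perm α)} {F : Fin r → Subgroup (Perm α)}
    {G : Fin s → Subgroup (Perm α)}
    (hF : IsDDPDecomposition H F) (hG : IsDDPDecomposition H G)
    (hGind : ∀ j, DDPIndecomposable (G j)) (j : Fin s) : ∃ i, G j ≤ F i := by
  classical
  obtain ⟨hFbot, hFdisj, hFsup⟩ := hF
  obtain ⟨hGbot, hGdisj, hGsup⟩ := hG
  set M : Fin r → Subgroup (Perm α) := fun i => G j ⊓ suppIn (Supp (F i)) with hM
  -- the `F`-components of any element of `G j` lie in the `M i`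
  have hcomp : ∀ k ∈ G j, ∃ f : (i : Fin r) → F i,
      Subgroup.noncommPiCoprod (hcomm_of hFdisj) f = k ∧ ∀ i, (f i : Perm α) ∈ M i := by
    intro k hk
    have hkH : k ∈ ⨆ i, F i := by
      rw [hFsup, ← hGsup]
      exact le_iSup G j hk
    rw [← Subgroup.noncommPiCoprod_range (hcomm := hcomm_of hFdisj),
      MonoidHom.mem_range] at hkH
    obtain ⟨f, hf⟩ := hkH
    refine ⟨f, hf, fun i => Subgroup.mem_inf.mpr ⟨?_, fun x hx => ⟨f i, (f i).2, hx⟩⟩⟩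
    -- the component lies in `G j`
    refine mem_of_comp ⟨hGbot, hGdisj, hGsup⟩ ?_ j ?_
    · rw [← hFsup]; exact le_iSup F i (f i).2
    · intro j' hne x hx
      have hkx : k x ≠ x := by
        rw [← hf, coprod_apply_moved hFdisj f hx]; exact hx
      have hxj : x ∈ Supp (G j) := ⟨k, hk, hkx⟩
      exact fun hx' => Set.disjoint_left.mp (hGdisj j j' (Ne.symm hne)) hxj hx'
  -- the `M i` have join `G j`
  have hMsup : (⨆ i, M i) = G j := by
    apply le_antisymm (iSup_le fun i => inf_le_left)
    intro k hk
    obtain ⟨f, hf, hfm⟩ := hcomp k hk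
    rw [← hf]
    exact coprod_mem _ f (fun i => le_iSup M i (hfm i))
  -- elements of `M i` are in `F i`
  have hMF : ∀ i, M i ≤ F i := by
    intro i k hk
    obtain ⟨hk1, hk2⟩ := Subgroup.mem_inf.mp hk
    refine mem_of_comp ⟨hFbot, hFdisj, hFsup⟩ ?_ i ?_
    · rw [← hFsup]
      have : k ∈ ⨆ i, G i := hGsup.symm ▸ (le_iSup G j hk1 : k ∈ _)
      rw [hGsup, ← hFsup] at this; exact this
    · intro i' hne x hx
      exact fun hx' => Set.disjoint_left.mp (hFdisj i i' (Ne.symm hne)) (hk2 x hx) hx'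
  -- at most one `M i` can be nontrivial, by indecomposability of `G j`
  by_cases hex : ∃ i, M i ≠ ⊥
  · obtain ⟨i, hi⟩ := hex
    by_cases hall : ∀ i', i' ≠ i → M i' = ⊥
    · refine ⟨i, ?_⟩
      rw [← hMsup]
      refine iSup_le fun i' => ?_
      rcases eq_or_ne i' i with rfl | hne
      · exact hMF i'
      · rw [hall i' hne]; exact bot_le.trans (bot_le : (⊥ : Subgroup (Perm α)) ≤ F i)
    · push_neg at hall
      obtain ⟨i₂, hne₂, hbot₂⟩ := hall
      -- build a 2-factor decomposition of `G j`, contradiction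
      set N : Subgroup (Perm α) := ⨆ (i' : Fin r) (_ : i' ≠ i), M i' with hN
      have hMN : ∀ i', i' ≠ i → M i' ≤ N := fun i' h => by
        rw [hN]; exact le_iSup_of_le i' (le_iSup_of_le h le_rfl)
      have hNsupp : N ≤ suppIn ((Supp (F i))ᶜ) := by
        rw [hN]
        refine iSup_le fun i' => iSup_le fun hne => ?_
        refine le_trans inf_le_right (suppIn_mono ?_)
        intro z hz
        exact fun hz' => Set.disjoint_left.mp (hFdisj i i' (Ne.symm hne)) hz' hz
      have hdecomp : IsDDPDecomposition (G j) ![M i, N] := by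
        refine ⟨?_, ?_, ?_⟩
        · intro k
          fin_cases k
          · simpa using hi
          · simp only [Matrix.cons_val_one, Matrix.head_cons]
            intro h
            exact hbot₂ (le_bot_iff.mp (h ▸ hMN i₂ hne₂))
        · have hd : Disjoint (Supp (M i)) (Supp N) :=
            Set.disjoint_of_subset (Supp_subset_of_le inf_le_right)
              (Supp_subset_of_le hNsupp) disjoint_compl_right
          intro a b hab
          fin_cases a <;> fin_cases b <;> simp_all <;>
            first
              | exact hd
              | exact hd.symm
        · have h1 : (⨆ i', M i') = M i ⊔ N := by
            apply le_antisymm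
            · refine iSup_le fun i' => ?_
              rcases eq_or_ne i' i with rfl | hne
              · exact le_sup_left
              · exact (hMN i' hne).trans le_sup_right
            · refine sup_le (le_iSup M i) ?_
              rw [hN]
              exact iSup_le fun i' => iSup_le fun _ => le_iSup M i'
          have h2 : (⨆ k : Fin 2, ![M i, N] k) = M i ⊔ N := by
            apply le_antisymm
            · refine iSup_le fun k => ?_
              fin_cases k
              · simpa using le_sup_left
              · simpa using (le_sup_right : N ≤ M i ⊔ N)
            · exact sup_le (le_iSup_of_le 0 (by simp)) (le_iSup_of_le 1 (by simp))
          rw [h2, ← h1, hMsup]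
      have := hGind j 2 ![M i, N] hdecomp
      omega
  · push_neg at hex
    exfalso
    apply hGbot j
    rw [← hMsup]
    simp [hex]

end Aux

/-- Any two finest disjoint direct product decompositions of
`H ≤ Sym(α)` (for `α` finite) are equivalent: the sets of supports of their
factors coincide. -/
theorem stmt_8 {α : Type*} [Finite α] (H : Subgroup (Equiv.Perm α)) {r s : ℕ}
    (F : Fin r → Subgroup (Equiv.Perm α)) (G : Fin s → Subgroup (Equiv.Perm α))
    (hF : IsDDPDecomposition H F) (hG : IsDDPDecomposition H G)
    (hFfinest : ∀ i, DDPIndecomposable (F i))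
    (hGfinest : ∀ j, DDPIndecomposable (G j)) :
    (Set.range fun i => Supp (F i)) = Set.range fun j => Supp (G j) := by
  have main : ∀ {r s : ℕ} (F : Fin r → Subgroup (Equiv.Perm α))
      (G : Fin s → Subgroup (Equiv.Perm α)), IsDDPDecomposition H F →
      IsDDPDecomposition H G → (∀ i, DDPIndecomposable (F i)) →
      (∀ j, DDPIndecomposable (G j)) →
      ∀ j, ∃ i, Supp (G j) = Supp (F i) := by
    intro r s F G hF hG hFind hGind j
    obtain ⟨i, hji⟩ := comp_le hF hG hGind j
    obtain ⟨j', hij'⟩ := comp_le hG hF hFind i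
    have hjj' : j = j' := by
      by_contra hne
      obtain ⟨x, hx⟩ := exists_moved (hG.1 j)
      exact Set.disjoint_left.mp (hG.2.1 j j' hne) hx (Supp_mono (hji.trans hij') hx)
    subst hjj'
    exact ⟨i, congrArg Supp (le_antisymm hji hij')⟩
  ext S
  simp only [Set.mem_range]
  constructor
  · rintro ⟨i, rfl⟩
    obtain ⟨j, hj⟩ := main G F hG hF hGfinest hFfinest i
    exact ⟨j, hj.symm⟩
  · rintro ⟨j, rfl⟩
    obtain ⟨i, hi⟩ := main F G hF hG hFfinest hGfinest j
    exact ⟨i, hi.symm⟩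
end

section
/- Let α be a finite set and H ≤ Sym(α). Let Δ, Γ, Ω ⊆ α be H-invariant sets with Γ ⊆ Δ and Ω ∩ Δ = ∅ (in the intended application, Δ is a union of H-orbits, Γ the union of the orbits in one cell of the finest decomposition of the restriction H|_Δ, and Ω is the next H-orbit). Assume that for every h ∈ H there exists g ∈ H with g(x) = h(x) for all x ∈ Γ and g(x) = x for all x ∈ Δ∖Γ. Then the following are equivalent: (i) for every h ∈ H there exists g ∈ H with g(x) = h(x) for all x ∈ Γ, g(x) = x for all x ∈ Δ∖Γ, and g(x) = x for all x ∈ Ω; (ii) for every h ∈ H fixing every point of Δ∖Γ there exists n ∈ H fixing every point of Δ such that n(x) = h(x) for all x ∈ Ω. -/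
/-- Let `H ≤ Sym(α)` (`α` finite) and let `Δ, Γ, Ω ⊆ α` be
`H`-invariant sets with `Γ ⊆ Δ` and `Ω ∩ Δ = ∅`.  Assume that for every `h ∈ H`
there is `g ∈ H` agreeing with `h` on `Γ` and fixing `Δ ∖ Γ` pointwise.  Then:
(i) for every `h ∈ H` there is `g ∈ H` agreeing with `h` on `Γ`, fixing `Δ ∖ Γ`
pointwise and fixing `Ω` pointwise, if and only if
(ii) for every `h ∈ H` fixing `Δ ∖ Γ` pointwise there is `n ∈ H` fixing `Δ`
pointwise and agreeing with `h` on `Ω`. -/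
theorem stmt_9 {α : Type*} [Finite α] (H : Subgroup (Equiv.Perm α))
    (Δ Γ Ω : Set α) (hΓΔ : Γ ⊆ Δ) (hΩΔ : Ω ∩ Δ = ∅)
    (hΔinv : ∀ h ∈ H, (⇑h) '' Δ = Δ)
    (hΓinv : ∀ h ∈ H, (⇑h) '' Γ = Γ)
    (hΩinv : ∀ h ∈ H, (⇑h) '' Ω = Ω)
    (hfac : ∀ h ∈ H, ∃ g ∈ H, (∀ x ∈ Γ, g x = h x) ∧ ∀ x ∈ Δ \ Γ, g x = x) :
    (∀ h ∈ H, ∃ g ∈ H,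
        (∀ x ∈ Γ, g x = h x) ∧ (∀ x ∈ Δ \ Γ, g x = x) ∧ ∀ x ∈ Ω, g x = x) ↔
      (∀ h ∈ H, (∀ x ∈ Δ \ Γ, h x = x) →
        ∃ n ∈ H, (∀ x ∈ Δ, n x = x) ∧ ∀ x ∈ Ω, n x = h x) := by
  constructor
  · intro hi h hH hfix
    obtain ⟨g, hgH, hgΓ, hgΔΓ, hgΩ⟩ := hi h hH
    -- g maps Γ onto Γ
    have hgΓim : (⇑g) '' Γ = Γ := by
      rw [show (⇑g) '' Γ = (⇑h) '' Γ from Set.image_congr hgΓ]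
      exact hΓinv h hH
    refine ⟨h * g⁻¹, mul_mem hH (inv_mem hgH), ?_, ?_⟩
    · intro x hx
      by_cases hxΓ : x ∈ Γ
      · obtain ⟨y, hy, hyx⟩ := hgΓim.symm.subset hxΓ
        have : g⁻¹ x = y := by rw [← hyx]; simp
        simp only [Equiv.Perm.coe_mul, Function.comp_apply, this]
        rw [← hgΓ y hy, hyx]
      · have hx' : x ∈ Δ \ Γ := ⟨hx, hxΓ⟩
        have hginv : g⁻¹ x = x := by
          conv_lhs => rw [← hgΔΓ x hx']
          simp
        simp only [Equiv.Perm.coe_mul, Function.comp_apply, hginv]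
        exact hfix x hx'
    · intro x hx
      have hginv : g⁻¹ x = x := by
        conv_lhs => rw [← hgΩ x hx]
        simp
      simpa using hginv
  · intro hii h hH
    obtain ⟨g, hgH, hgΓ, hgΔΓ⟩ := hfac h hH
    obtain ⟨n, hnH, hnΔ, hnΩ⟩ := hii g hgH hgΔΓ
    have hninv : ∀ x ∈ Δ, n⁻¹ x = x := by
      intro x hx
      conv_lhs => rw [← hnΔ x hx]
      simp
    have hgΓim : (⇑g) '' Γ = Γ := by
      rw [show (⇑g) '' Γ = (⇑h) '' Γ from Set.image_congr hgΓ]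
      exact hΓinv h hH
    refine ⟨n⁻¹ * g, mul_mem (inv_mem hnH) hgH, ?_, ?_, ?_⟩
    · intro x hx
      have hgx : g x ∈ Γ := hgΓim ▸ Set.mem_image_of_mem _ hx
      simp only [Equiv.Perm.coe_mul, Function.comp_apply]
      rw [hninv _ (hΓΔ hgx), hgΓ x hx]
    · intro x hx
      simp only [Equiv.Perm.coe_mul, Function.comp_apply]
      rw [hgΔΓ x hx, hninv x hx.1]
    · intro x hx
      simp only [Equiv.Perm.coe_mul, Function.comp_apply]
      rw [← hnΩ x hx]
      simp
end
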